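/- arXiv:2107.08164 — 2 statements merged into one kernel-verified Lean document; each statement's English description precedes it below -/
import Mathlib

section
/- (Collision detection with k senders.) Let n ≥ 1 and let S ⊆ Fin n with |S| = k (0 ≤ k ≤ n) be the set of qubits to which Pauli-X is applied, and let ψ = X_S ψ_W. Then every bitstring x with ψ(x) ≠ 0 has Hamming weight k−1 or k+1; the total Born-rule probability of outcomes of Hamming weight k−1 equals k/n, and the total probability of outcomes of Hamming weight k+1 equals (n−k)/n. In particular, if k = 0 every outcome has weight 1 with probability 1, and if k = n every outcome has weight n−1 with probability 1. -/
/-- Hamming weight of a bitstring. -/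
def hammingWt {n : ℕ} (x : Fin n → ZMod 2) : ℕ :=
  (Finset.univ.filter fun i => x i = 1).card

/-- The `n`-qubit W state: amplitude `1/√n` on each Hamming-weight-1 bitstring. -/
noncomputable def wState (n : ℕ) : EuclideanSpace ℂ (Fin n → ZMod 2) :=
  WithLp.toLp 2 fun x => if hammingWt x = 1 then ((1 / Real.sqrt n : ℝ) : ℂ) else 0

/-- Indicator bitstring of a set of qubits. -/
def chi {n : ℕ} (S : Finset (Fin n)) : Fin n → ZMod 2 :=
  fun i => if i ∈ S then 1 else 0

/-- Pauli-X flip on the qubits in `S`. -/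
noncomputable def pauliX {n : ℕ} (S : Finset (Fin n))
    (ψ : EuclideanSpace ℂ (Fin n → ZMod 2)) : EuclideanSpace ℂ (Fin n → ZMod 2) :=
  WithLp.toLp 2 fun x => ψ (x + chi S)

/-- Bitstring with a single 1 in position `i`. -/
def eVec {n : ℕ} (i : Fin n) : Fin n → ZMod 2 :=
  fun j => if j = i then 1 else 0

lemma add_chi_chi {n : ℕ} (S : Finset (Fin n)) (x : Fin n → ZMod 2) :
    x + chi S + chi S = x := by
  funext j
  show x j + chi S j + chi S j = x j
  have : ∀ a b : ZMod 2, a + b + b = a := by decide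
  exact this _ _

lemma hammingWt_eVec {n : ℕ} (i : Fin n) : hammingWt (eVec i) = 1 := by
  unfold hammingWt
  have : (Finset.univ.filter fun j => eVec i j = 1) = {i} := by
    ext j
    simp only [Finset.mem_filter, Finset.mem_univ, true_and, Finset.mem_singleton, eVec]
    by_cases hj : j = i <;> simp [hj]
  rw [this, Finset.card_singleton]

lemma hammingWt_eq_one_iff {n : ℕ} (y : Fin n → ZMod 2) :
    hammingWt y = 1 ↔ ∃ i, y = eVec i := by
  constructor
  · intro h
    obtain ⟨i, hi⟩ := Finset.card_eq_one.mp h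
    refine ⟨i, funext fun j => ?_⟩
    have hmem : y j = 1 ↔ j = i := by
      have : j ∈ Finset.univ.filter (fun j => y j = 1) ↔ j ∈ ({i} : Finset (Fin n)) := by
        rw [hi]
      simpa using this
    have h01 : ∀ a : ZMod 2, a ≠ 1 → a = 0 := by decide
    by_cases hj : j = i
    · subst hj; simp [eVec, hmem.mpr rfl]
    · simp [eVec, hj, h01 _ (fun h' => hj (hmem.mp h'))]
  · rintro ⟨i, rfl⟩; exact hammingWt_eVec i

lemma eVec_inj {n : ℕ} {i i' : Fin n} (h : eVec i = eVec i') : i = i' := by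
  by_contra hne
  have := congrFun h i
  simp [eVec, hne] at this

lemma hammingWt_eVec_add_chi {n : ℕ} (i : Fin n) (S : Finset (Fin n)) :
    hammingWt (eVec i + chi S) = if i ∈ S then S.card - 1 else S.card + 1 := by
  unfold hammingWt
  by_cases hi : i ∈ S
  · rw [if_pos hi]
    have : (Finset.univ.filter fun j => (eVec i + chi S) j = 1) = S.erase i := by
      ext j
      rw [Finset.mem_filter]
      simp only [Finset.mem_filter, Finset.mem_univ, true_and, Finset.mem_erase,
        Pi.add_apply, eVec, chi]
      by_cases hj : j = i <;> by_cases hjS : j ∈ S <;> simp [hj, hjS, hi]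
    rw [this, Finset.card_erase_of_mem hi]
  · rw [if_neg hi]
    have : (Finset.univ.filter fun j => (eVec i + chi S) j = 1) = insert i S := by
      ext j
      rw [Finset.mem_filter]
      simp only [Finset.mem_filter, Finset.mem_univ, true_and, Finset.mem_insert,
        Pi.add_apply, eVec, chi]
      by_cases hj : j = i <;> by_cases hjS : j ∈ S <;> simp [hj, hjS, hi]
    rw [this, Finset.card_insert_of_notMem hi]

lemma amp_sq {n : ℕ} (S : Finset (Fin n)) (x : Fin n → ZMod 2) :
    ‖pauliX S (wState n) x‖ ^ 2
      = if hammingWt (x + chi S) = 1 then (1 / (n : ℝ)) else 0 := by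
  show ‖wState n (x + chi S)‖ ^ 2 = _
  unfold wState
  simp only [WithLp.ofLp_toLp]
  by_cases h : hammingWt (x + chi S) = 1
  · rw [if_pos h, if_pos h, Complex.norm_real, Real.norm_of_nonneg (by positivity),
      div_pow, one_pow, Real.sq_sqrt (Nat.cast_nonneg n)]
  · rw [if_neg h, if_neg h]; simp

lemma sum_key (n : ℕ) (S : Finset (Fin n)) (m : ℕ) :
    ∑ x ∈ Finset.univ.filter (fun x : Fin n → ZMod 2 => hammingWt x = m),
        ‖pauliX S (wState n) x‖ ^ 2
    = ((Finset.univ.filter (fun i : Fin n =>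
        (if i ∈ S then S.card - 1 else S.card + 1) = m)).card : ℝ) / n := by
  simp only [amp_sq]
  rw [Finset.sum_ite, Finset.sum_const, Finset.sum_const, smul_zero, add_zero,
    Finset.filter_filter, nsmul_eq_mul]
  have hcard : (Finset.univ.filter (fun i : Fin n =>
        (if i ∈ S then S.card - 1 else S.card + 1) = m)).card
      = (Finset.univ.filter (fun x : Fin n → ZMod 2 =>
          hammingWt x = m ∧ hammingWt (x + chi S) = 1)).card := by
    apply Finset.card_bij (fun i _ => eVec i + chi S)
    · intro i hi
      simp only [Finset.mem_filter, Finset.mem_univ, true_and] at hi ⊢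
      refine ⟨by rw [hammingWt_eVec_add_chi]; exact hi, ?_⟩
      rw [add_chi_chi, hammingWt_eVec]
    · intro i _ i' _ h
      have : eVec i = eVec i' := by
        have := congrArg (· + chi S) h
        simpa [add_chi_chi] using this
      exact eVec_inj this
    · intro x hx
      simp only [Finset.mem_filter, Finset.mem_univ, true_and] at hx
      obtain ⟨i, hi⟩ := (hammingWt_eq_one_iff _).mp hx.2
      refine ⟨i, ?_, ?_⟩
      · simp only [Finset.mem_filter, Finset.mem_univ, true_and]
        rw [← hammingWt_eVec_add_chi i S, ← hi, add_chi_chi]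
        exact hx.1
      · rw [← hi, add_chi_chi]
  rw [hcard, mul_one_div]

theorem stmt2 (n : ℕ) (hn : 1 ≤ n) (S : Finset (Fin n)) (k : ℕ) (hk : S.card = k) :
    (∀ x : Fin n → ZMod 2, pauliX S (wState n) x ≠ 0 →
        hammingWt x = k - 1 ∨ hammingWt x = k + 1) ∧
    (∑ x ∈ Finset.univ.filter (fun x : Fin n → ZMod 2 => hammingWt x = k - 1),
        ‖pauliX S (wState n) x‖ ^ 2 = (k : ℝ) / n) ∧
    (∑ x ∈ Finset.univ.filter (fun x : Fin n → ZMod 2 => hammingWt x = k + 1),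
        ‖pauliX S (wState n) x‖ ^ 2 = ((n : ℝ) - k) / n) ∧
    (k = 0 → (∀ x : Fin n → ZMod 2, pauliX S (wState n) x ≠ 0 → hammingWt x = 1) ∧
      ∑ x ∈ Finset.univ.filter (fun x : Fin n → ZMod 2 => hammingWt x = 1),
        ‖pauliX S (wState n) x‖ ^ 2 = 1) ∧
    (k = n → (∀ x : Fin n → ZMod 2, pauliX S (wState n) x ≠ 0 → hammingWt x = n - 1) ∧
      ∑ x ∈ Finset.univ.filter (fun x : Fin n → ZMod 2 => hammingWt x = n - 1),
        ‖pauliX S (wState n) x‖ ^ 2 = 1) := by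
  have hkn : k ≤ n := by
    rw [← hk]; simpa using Finset.card_le_univ S
  have hwtle : ∀ x : Fin n → ZMod 2, hammingWt x ≤ n := by
    intro x
    calc hammingWt x ≤ Finset.univ.card := Finset.card_filter_le _ _
    _ = n := by simp
  -- pointwise characterization
  have hpoint : ∀ x : Fin n → ZMod 2, pauliX S (wState n) x ≠ 0 →
      hammingWt x = k - 1 ∨ hammingWt x = k + 1 := by
    intro x hx
    have h1 : hammingWt (x + chi S) = 1 := by
      by_contra h
      exact hx (by show wState n (x + chi S) = 0; unfold wState; simp only [WithLp.ofLp_toLp]; rw [if_neg h])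
    obtain ⟨i, hi⟩ := (hammingWt_eq_one_iff _).mp h1
    have hxeq : x = eVec i + chi S := by rw [← hi, add_chi_chi]
    rw [hxeq, hammingWt_eVec_add_chi, hk]
    by_cases hiS : i ∈ S
    · exact Or.inl (if_pos hiS)
    · exact Or.inr (if_neg hiS)
  -- the two sums
  have hsum1 : ∑ x ∈ Finset.univ.filter (fun x : Fin n → ZMod 2 => hammingWt x = k - 1),
      ‖pauliX S (wState n) x‖ ^ 2 = (k : ℝ) / n := by
    rw [sum_key]
    congr 1
    have : (Finset.univ.filter (fun i : Fin n =>
        (if i ∈ S then S.card - 1 else S.card + 1) = k - 1)) = S := by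
      ext i
      simp only [Finset.mem_filter, Finset.mem_univ, true_and, hk]
      by_cases hi : i ∈ S <;> simp [hi] <;> omega
    rw [this, hk]
  have hsum2 : ∑ x ∈ Finset.univ.filter (fun x : Fin n → ZMod 2 => hammingWt x = k + 1),
      ‖pauliX S (wState n) x‖ ^ 2 = ((n : ℝ) - k) / n := by
    rw [sum_key]
    have : (Finset.univ.filter (fun i : Fin n =>
        (if i ∈ S then S.card - 1 else S.card + 1) = k + 1)) = Sᶜ := by
      ext i
      simp only [Finset.mem_filter, Finset.mem_univ, true_and, hk, Finset.mem_compl]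
      by_cases hi : i ∈ S <;> simp [hi] <;> omega
    rw [this, Finset.card_compl, hk]
    congr 1
    have : Fintype.card (Fin n) = n := by simp
    rw [this, Nat.cast_sub hkn]
  refine ⟨hpoint, hsum1, hsum2, ?_, ?_⟩
  · intro hk0
    subst hk0
    constructor
    · intro x hx
      rcases hpoint x hx with h | h
      · exfalso
        -- weight 0 - 1 = 0 case: show impossible
        have hS : S = ∅ := Finset.card_eq_zero.mp hk
        have h1 : hammingWt (x + chi S) = 1 := by
          by_contra hc
          exact hx (by show wState n (x + chi S) = 0; unfold wState; simp only [WithLp.ofLp_toLp]; rw [if_neg hc])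
        have hchi : chi S = 0 := by
          funext j; simp [chi, hS]
        rw [hchi, add_zero] at h1
        omega
      · simpa using h
    · have := hsum2
      simp only [Nat.cast_zero, sub_zero, zero_add] at this
      rw [this, div_self]
      exact Nat.cast_ne_zero.mpr (by omega)
  · intro hkn'
    subst hkn'
    constructor
    · intro x hx
      rcases hpoint x hx with h | h
      · exact h
      · exact absurd (h ▸ hwtle x) (by omega)
    · rw [hsum1, div_self (Nat.cast_ne_zero.mpr (by omega))]
end

section
/- (Correctness of the quantum notification protocol.) Let n ≥ 1, let E ⊆ Fin n have even cardinality (the source's random even set of X flips), and let T ⊆ Fin n (the set of agents who apply X because they notify the given agent). Let ψ be the state obtained from the n-qubit W state ψ_W by applying X_E and then X_T. Then: every bitstring x with ψ(x) ≠ 0 has even Hamming weight if |T| is odd, and every bitstring x with ψ(x) ≠ 0 has odd Hamming weight if |T| is even. Consequently the parity of the broadcast measurement outcomes equals 0 with certainty exactly when an odd number of agents notified the given agent. -/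
lemma hw_cast {n : ℕ} (x : Fin n → ZMod 2) :
    (hammingWt x : ZMod 2) = ∑ i, x i := by
  unfold hammingWt
  rw [Finset.card_filter, Nat.cast_sum]
  apply Finset.sum_congr rfl
  intro i _
  rcases (by decide : ∀ a : ZMod 2, a = 0 ∨ a = 1) (x i) with h | h <;> simp [h]

lemma hw_add {n : ℕ} (x y : Fin n → ZMod 2) :
    (hammingWt (x + y) : ZMod 2) = hammingWt x + hammingWt y := by
  simp [hw_cast, Finset.sum_add_distrib]

lemma hw_chi {n : ℕ} (S : Finset (Fin n)) : hammingWt (chi S) = S.card := by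
  unfold hammingWt chi
  congr 1
  ext i
  simp

lemma cast0 (m : ℕ) : (m : ZMod 2) = 0 ↔ Even m := by
  simp [ZMod.natCast_eq_zero_iff, Nat.even_iff]
  omega

lemma cast1 (m : ℕ) : (m : ZMod 2) = 1 ↔ Odd m := by
  rw [← Nat.not_even_iff_odd, ← cast0]
  rcases (by decide : ∀ a : ZMod 2, a = 0 ∨ a = 1) (m : ZMod 2) with h | h <;>
    simp [h]

theorem stmt5 (n : ℕ) (hn : 1 ≤ n) (E T : Finset (Fin n)) (hE : Even E.card) :
    ((Odd T.card → ∀ x : Fin n → ZMod 2,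
        wState n (x + chi E + chi T) ≠ 0 → Even (hammingWt x)) ∧
     (Even T.card → ∀ x : Fin n → ZMod 2,
        wState n (x + chi E + chi T) ≠ 0 → Odd (hammingWt x))) ∧
    ∀ x : Fin n → ZMod 2, wState n (x + chi E + chi T) ≠ 0 →
      (Even (hammingWt x) ↔ Odd T.card) := by
  have key : ∀ x : Fin n → ZMod 2, wState n (x + chi E + chi T) ≠ 0 →
      (Even (hammingWt x) ↔ Odd T.card) := by
    intro x hx
    have h1 : hammingWt (x + chi E + chi T) = 1 := by
      by_contra h
      simp [wState, h] at hx
    have h2 : (hammingWt x : ZMod 2) + E.card + T.card = 1 := by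
      have := hw_add (x + chi E) (chi T)
      rw [hw_add x (chi E), hw_chi, hw_chi] at this
      rw [← this, h1]; norm_num
    rw [(cast0 E.card).mpr hE, add_zero] at h2
    constructor
    · intro he
      rw [(cast0 _).mpr he, zero_add] at h2
      exact (cast1 _).mp h2
    · intro ho
      rw [(cast1 _).mpr ho] at h2
      have : (hammingWt x : ZMod 2) = 0 := by
        have h4 := congrArg (· + 1) h2
        simpa using h4
      exact (cast0 _).mp this
  refine ⟨⟨fun hT x hx => (key x hx).mpr hT, fun hT x hx => ?_⟩, key⟩
  rcases Nat.even_or_odd (hammingWt x) with h | h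
  · exact absurd ((key x hx).mp h) (Nat.not_odd_iff_even.mpr hT)
  · exact h
end
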